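/- Let p, q, r be sequences of positive numbers with 1/p_k² + 1/q_k² = 1/r_k² and ∑_{k≥1} r_k²/p_k² < ∞. Let (u_α) be a family in a Hilbert space U with ∑_α p^{2α}‖u_α‖² < ∞ and (v_α) a family in a Hilbert space X with ∑_α r^{−2α}‖v_α‖² < ∞. Then for each multi-index α, the series ∑_β C(α+β,β)^{1/2} v_{α+β} ⊗ u_β converges absolutely in X⊗U, and with D_α denoting its sum, ∑_α q^{−2α}‖D_α‖² ≤ (∏_{k≥1} p_k²/(p_k²−r_k²)) (∑_α p^{2α}‖u_α‖²)(∑_α r^{−2α}‖v_α‖²). -/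

import Mathlib

open scoped BigOperators

noncomputable section

abbrev MultiIndex := ℕ →₀ ℕ

/-- `r^α = ∏ₖ r_k^{α_k}` -/
def mpow (r : ℕ → ℝ) (α : MultiIndex) : ℝ := ∏ k ∈ α.support, r k ^ α k

/-- `α! = ∏ₖ α_k!` -/
def mfact (α : MultiIndex) : ℕ := ∏ k ∈ α.support, (α k).factorial

/-- generalized binomial coefficient `C(α,β) = ∏ₖ C(α_k, β_k)` -/
def mchoose (α β : MultiIndex) : ℕ :=
  ∏ k ∈ α.support ∪ β.support, Nat.choose (α k) (β k)

/-- `|α| = ∑ₖ α_k` -/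
def mdeg (α : MultiIndex) : ℕ := ∑ k ∈ α.support, α k

section AuxLemmas
open Finset

-- aux lemmas

lemma mpow_eq_prod {c : ℕ → ℝ} {γ : MultiIndex} {s : Finset ℕ} (h : γ.support ⊆ s) :
    mpow c γ = ∏ k ∈ s, c k ^ γ k := by
  refine Finset.prod_subset h ?_
  intro k _ hk'
  simp [Finsupp.notMem_support_iff.mp hk']

lemma mpow_nonneg {c : ℕ → ℝ} (h : ∀ k, 0 ≤ c k) (γ : MultiIndex) : 0 ≤ mpow c γ :=
  Finset.prod_nonneg fun k _ => pow_nonneg (h k) _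

lemma mpow_pos {c : ℕ → ℝ} (h : ∀ k, 0 < c k) (γ : MultiIndex) : 0 < mpow c γ :=
  Finset.prod_pos fun k _ => pow_pos (h k) _

lemma mpow_mul (a b : ℕ → ℝ) (γ : MultiIndex) :
    mpow (fun k => a k * b k) γ = mpow a γ * mpow b γ := by
  simp [mpow, mul_pow, Finset.prod_mul_distrib]

lemma mpow_add (c : ℕ → ℝ) (α β : MultiIndex) :
    mpow c (α + β) = mpow c α * mpow c β := by
  have h : ∀ γ : MultiIndex, mpow c γ = γ.prod fun k n => c k ^ n := fun γ => rfl
  rw [h, h, h]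
  exact Finsupp.prod_add_index' (fun a => pow_zero _) (fun a b₁ b₂ => pow_add _ _ _)

lemma mpow_one (γ : MultiIndex) : mpow (fun _ => (1:ℝ)) γ = 1 := by simp [mpow]

lemma mchoose_eq_prod {a b : MultiIndex} {s : Finset ℕ} (h : a.support ∪ b.support ⊆ s) :
    (mchoose a b : ℝ) = ∏ k ∈ s, ((a k).choose (b k) : ℝ) := by
  rw [mchoose, Nat.cast_prod]
  refine Finset.prod_subset h ?_
  intro k _ hk'
  simp only [Finset.mem_union, not_or, Finsupp.notMem_support_iff] at hk'
  simp [hk'.1, hk'.2]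

lemma choose_sum_rec (x : ℝ) (a N : ℕ) :
    ∑ n ∈ Finset.range (N+1), ((a+1+n).choose n : ℝ) * x^n
      = ∑ n ∈ Finset.range (N+1), ((a+n).choose n : ℝ) * x^n
        + x * ∑ n ∈ Finset.range N, ((a+1+n).choose n : ℝ) * x^n := by
  induction N with
  | zero => simp
  | succ N ih =>
    have hnat := Nat.choose_succ_succ (a+N+1) N
    have hp : ((a+1+(N+1)).choose (N+1) : ℝ)
        = ((a+(N+1)).choose (N+1) : ℝ) + ((a+1+N).choose N : ℝ) := by
      have h1 : a+1+(N+1) = (a+N+1)+1 := by omega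
      have h2 : a+(N+1) = a+N+1 := by omega
      have h3 : a+1+N = a+N+1 := by omega
      rw [h1, h2, h3]
      push_cast [Nat.choose_succ_succ]
      ring
    rw [Finset.sum_range_succ (f := fun n => ((a+1+n).choose n : ℝ) * x^n) (n := N+1),
      Finset.sum_range_succ (f := fun n => ((a+n).choose n : ℝ) * x^n) (n := N+1),
      Finset.sum_range_succ (f := fun n => ((a+1+n).choose n : ℝ) * x^n) (n := N)]
    rw [Finset.sum_range_succ (f := fun n => ((a+1+n).choose n : ℝ) * x^n) (n := N)] at ih
    linear_combination ih + x^(N+1) * hp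

lemma choose_sum_le {x : ℝ} (h0 : 0 ≤ x) (h1 : x < 1) (a : ℕ) :
    ∀ N, ∑ n ∈ Finset.range N, ((a+n).choose n : ℝ) * x^n ≤ ((1-x)⁻¹)^(a+1) := by
  induction a with
  | zero =>
    intro N
    simp only [Nat.zero_add, Nat.choose_self, Nat.cast_one, one_mul]
    calc ∑ n ∈ Finset.range N, x^n ≤ ∑' n : ℕ, x^n :=
          Summable.sum_le_tsum _ (fun n _ => pow_nonneg h0 n) (summable_geometric_of_lt_one h0 h1)
      _ = (1-x)⁻¹ := tsum_geometric_of_lt_one h0 h1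
      _ = ((1-x)⁻¹)^(0+1) := by ring
  | succ a ih =>
    intro N
    have h3 : 0 < 1 - x := by linarith
    cases N with
    | zero => simp; positivity
    | succ N =>
      have hrec := choose_sum_rec x a N
      have hnn : ∀ n, 0 ≤ ((a+1+n).choose n : ℝ) * x^n := fun n => by positivity
      have hmono : ∑ n ∈ Finset.range N, ((a+1+n).choose n : ℝ)*x^n
          ≤ ∑ n ∈ Finset.range (N+1), ((a+1+n).choose n : ℝ)*x^n := by
        refine Finset.sum_le_sum_of_subset_of_nonneg ?_ (fun n _ _ => hnn n)
        exact Finset.range_subset_range.2 (Nat.le_succ N)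
      have hih := ih (N+1)
      have hx := mul_le_mul_of_nonneg_left hmono h0
      have h4 : (1-x) * (∑ n ∈ Finset.range (N+1), ((a+1+n).choose n : ℝ)*x^n)
          ≤ ((1-x)⁻¹)^(a+1) := by nlinarith [hrec, hih, hx]
      calc ∑ n ∈ Finset.range (N+1), ((a+1+n).choose n : ℝ)*x^n
          = (1-x)⁻¹ * ((1-x) * ∑ n ∈ Finset.range (N+1), ((a+1+n).choose n : ℝ)*x^n) := by
            field_simp
        _ ≤ (1-x)⁻¹ * ((1-x)⁻¹)^(a+1) := mul_le_mul_of_nonneg_left h4 (by positivity)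
        _ = ((1-x)⁻¹)^(a+1+1) := by ring

lemma prod_le_tprod_real {f : ℕ → ℝ} (h1 : ∀ k, 1 ≤ f k) (hf : Multipliable f)
    (s : Finset ℕ) : ∏ k ∈ s, f k ≤ ∏' k, f k := by
  refine ge_of_tendsto hf.hasProd ?_
  filter_upwards [Filter.eventually_ge_atTop s] with t hst
  have hst' : s ⊆ t := hst
  rw [← Finset.prod_sdiff hst']
  have h0 : (0:ℝ) ≤ ∏ k ∈ s, f k := Finset.prod_nonneg fun k _ => le_trans zero_le_one (h1 k)
  have h2 : (1:ℝ) ≤ ∏ k ∈ t \ s, f k := by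
    calc (1:ℝ) = ∏ k ∈ t \ s, 1 := by simp
      _ ≤ ∏ k ∈ t \ s, f k := Finset.prod_le_prod (fun _ _ => zero_le_one) (fun k _ => h1 k)
  nlinarith

lemma multipliable_aux {x : ℕ → ℝ} (h0 : ∀ k, 0 ≤ x k) (h1 : ∀ k, x k < 1)
    (hs : Summable x) : Multipliable fun k => (1 - x k)⁻¹ := by
  have hpos : ∀ k, 0 < 1 - x k := fun k => by linarith [h1 k]
  have hlog : Summable fun k => Real.log ((1 - x k)⁻¹) := by
    have hten : ∀ᶠ k in Filter.atTop, x k ≤ 1/2 := by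
      have := hs.tendsto_atTop_zero
      exact this.eventually_le_const (by norm_num)
    obtain ⟨N, hN⟩ := Filter.eventually_atTop.1 hten
    rw [← summable_nat_add_iff N]
    refine Summable.of_nonneg_of_le (fun k => ?_) (fun k => ?_)
      ((hs.comp_injective (add_left_injective N)).mul_left 2)
    · rw [Real.log_inv]
      have : Real.log (1 - x (k + N)) ≤ 0 :=
        Real.log_nonpos (by linarith [hpos (k+N)]) (by linarith [h0 (k+N)])
      linarith
    · have hk : x (k + N) ≤ 1/2 := hN (k+N) (Nat.le_add_left N k)
      have hp := hpos (k+N)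
      have hle : Real.log ((1 - x (k+N))⁻¹) ≤ (1 - x (k+N))⁻¹ - 1 :=
        Real.log_le_sub_one_of_pos (by positivity)
      have h2 : (1 - x (k+N))⁻¹ ≤ 1 + 2 * x (k+N) := by
        rw [inv_eq_one_div, div_le_iff₀ hp]
        nlinarith [h0 (k+N)]
      simp only [Function.comp]
      linarith
  exact Real.multipliable_of_summable_log (fun n => inv_pos.2 (hpos n)) hlog

lemma sum_prod_le (h : ℕ → ℕ → ℝ) (H : ℕ → ℝ) (hh : ∀ k n, 0 ≤ h k n)
    (hH : ∀ k (G : Finset ℕ), ∑ n ∈ G, h k n ≤ H k) :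
    ∀ (s : Finset ℕ) (F : Finset MultiIndex), (∀ β ∈ F, β.support ⊆ s) →
      ∑ β ∈ F, ∏ k ∈ s, h k (β k) ≤ ∏ k ∈ s, H k := by
  classical
  have hH0 : ∀ k, 0 ≤ H k := fun k => le_trans (by simpa using hh k 0) (hH k {0})
  intro s
  induction s using Finset.induction_on with
  | empty =>
    intro F hF
    have hsub : F ⊆ {0} := by
      intro β hβ
      have : β.support = ∅ := Finset.subset_empty.1 (hF β hβ)
      simp [Finsupp.support_eq_empty.1 this]
    calc ∑ β ∈ F, ∏ k ∈ (∅ : Finset ℕ), h k (β k) = ∑ β ∈ F, 1 := by simp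
      _ ≤ ∑ β ∈ ({0} : Finset MultiIndex), 1 :=
          Finset.sum_le_sum_of_subset_of_nonneg hsub (fun _ _ _ => zero_le_one)
      _ = 1 := by simp
      _ = ∏ k ∈ (∅ : Finset ℕ), H k := by simp
  | @insert a s ha ih =>
    intro F hF
    have key : ∀ n : ℕ, ∑ β ∈ F.filter (fun β => β a = n), ∏ k ∈ s, h k (β k)
        ≤ ∏ k ∈ s, H k := by
      intro n
      have heq : ∀ β ∈ F.filter (fun β => β a = n),
          ∏ k ∈ s, h k (β k) = ∏ k ∈ s, h k ((β.erase a) k) := by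
        intro β _
        refine Finset.prod_congr rfl fun k hk => ?_
        rw [Finsupp.erase_ne (fun hka => ha (by rwa [hka] at hk))]
      have hinj : ∀ β ∈ F.filter (fun β => β a = n), ∀ β' ∈ F.filter (fun β => β a = n),
          β.erase a = β'.erase a → β = β' := by
        intro β hβ β' hβ' hee
        have hn : β a = n := (Finset.mem_filter.1 hβ).2
        have hn' : β' a = n := (Finset.mem_filter.1 hβ').2
        ext k
        by_cases hk : k = a
        · rw [hk, hn, hn']
        · have := DFunLike.congr_fun hee k
          simpa [Finsupp.erase_ne hk] using this
      calc ∑ β ∈ F.filter (fun β => β a = n), ∏ k ∈ s, h k (β k)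
          = ∑ β ∈ F.filter (fun β => β a = n), ∏ k ∈ s, h k ((β.erase a) k) :=
            Finset.sum_congr rfl heq
        _ = ∑ γ ∈ (F.filter (fun β => β a = n)).image (fun β => β.erase a),
              ∏ k ∈ s, h k (γ k) := by rw [Finset.sum_image hinj]
        _ ≤ ∏ k ∈ s, H k := by
            refine ih _ ?_
            intro γ hγ
            obtain ⟨β, hβ, rfl⟩ := Finset.mem_image.1 hγ
            rw [Finsupp.support_erase]
            intro k hk
            have hk1 : k ∈ β.support := Finset.mem_of_mem_erase hk
            have hk2 : k ≠ a := Finset.ne_of_mem_erase hk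
            have := hF β (Finset.mem_filter.1 hβ).1 hk1
            rcases Finset.mem_insert.1 this with h | h
            · exact absurd h hk2
            · exact h
    calc ∑ β ∈ F, ∏ k ∈ insert a s, h k (β k)
        = ∑ n ∈ F.image (fun β => β a), ∑ β ∈ F.filter (fun β => β a = n),
            ∏ k ∈ insert a s, h k (β k) := by
          rw [Finset.sum_fiberwise_of_maps_to (fun β hβ => Finset.mem_image_of_mem _ hβ)]
      _ = ∑ n ∈ F.image (fun β => β a), h a n * ∑ β ∈ F.filter (fun β => β a = n),
            ∏ k ∈ s, h k (β k) := by
          refine Finset.sum_congr rfl fun n _ => ?_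
          rw [Finset.mul_sum]
          refine Finset.sum_congr rfl fun β hβ => ?_
          have hn : β a = n := (Finset.mem_filter.1 hβ).2
          rw [Finset.prod_insert ha, hn]
      _ ≤ ∑ n ∈ F.image (fun β => β a), h a n * ∏ k ∈ s, H k :=
          Finset.sum_le_sum fun n _ => mul_le_mul_of_nonneg_left (key n) (hh a n)
      _ = (∑ n ∈ F.image (fun β => β a), h a n) * ∏ k ∈ s, H k := by
          rw [Finset.sum_mul]
      _ ≤ H a * ∏ k ∈ s, H k :=
          mul_le_mul_of_nonneg_right (hH a _) (Finset.prod_nonneg fun k _ => hH0 k)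
      _ = ∏ k ∈ insert a s, H k := (Finset.prod_insert ha).symm

lemma key_bound {x : ℕ → ℝ} (h0 : ∀ k, 0 ≤ x k) (h1 : ∀ k, x k < 1)
    (hmul : Multipliable fun k => (1 - x k)⁻¹) (α : MultiIndex) (F : Finset MultiIndex) :
    mpow (fun k => 1 - x k) α * ∑ β ∈ F, (mchoose (α+β) β : ℝ) * mpow x β
      ≤ ∏' k, (1 - x k)⁻¹ := by
  classical
  set s : Finset ℕ := α.support ∪ F.sup Finsupp.support with hs
  have hαs : α.support ⊆ s := Finset.subset_union_left
  have hβs : ∀ β ∈ F, β.support ⊆ s := fun β hβ =>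
    (Finset.le_sup hβ).trans Finset.subset_union_right
  have hterm : ∀ β ∈ F, (mchoose (α+β) β : ℝ) * mpow x β
      = ∏ k ∈ s, (((α k + β k).choose (β k) : ℝ) * x k ^ β k) := by
    intro β hβ
    rw [Finset.prod_mul_distrib]
    congr 1
    · have hsub : (α+β).support ∪ β.support ⊆ s := by
        apply Finset.union_subset
        · exact (Finsupp.support_add).trans (Finset.union_subset hαs (hβs β hβ))
        · exact hβs β hβ
      rw [mchoose_eq_prod hsub]
      exact Finset.prod_congr rfl fun k _ => by rw [Finsupp.add_apply]
    · exact mpow_eq_prod (hβs β hβ)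
  have hsum : ∑ β ∈ F, (mchoose (α+β) β : ℝ) * mpow x β
      ≤ ∏ k ∈ s, ((1 - x k)⁻¹)^(α k + 1) := by
    rw [Finset.sum_congr rfl hterm]
    refine sum_prod_le (fun k n => ((α k + n).choose n : ℝ) * x k ^ n)
      (fun k => ((1 - x k)⁻¹)^(α k + 1)) (fun k n => mul_nonneg (Nat.cast_nonneg _) (pow_nonneg (h0 k) _)) ?_ s F hβs
    intro k G
    obtain ⟨N, hN⟩ := Finset.exists_nat_subset_range G
    calc ∑ n ∈ G, ((α k + n).choose n : ℝ) * x k ^ n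
        ≤ ∑ n ∈ Finset.range N, ((α k + n).choose n : ℝ) * x k ^ n :=
          Finset.sum_le_sum_of_subset_of_nonneg hN (fun n _ _ => mul_nonneg (Nat.cast_nonneg _) (pow_nonneg (h0 k) _))
      _ ≤ ((1 - x k)⁻¹)^(α k + 1) := choose_sum_le (h0 k) (h1 k) (α k) N
  have hfac : mpow (fun k => 1 - x k) α * ∏ k ∈ s, ((1 - x k)⁻¹)^(α k + 1)
      = ∏ k ∈ s, (1 - x k)⁻¹ := by
    rw [mpow_eq_prod hαs, ← Finset.prod_mul_distrib]
    refine Finset.prod_congr rfl fun k _ => ?_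
    have hne : (1 - x k) ≠ 0 := ne_of_gt (by linarith [h1 k])
    rw [pow_succ, ← mul_assoc, ← mul_pow, mul_inv_cancel₀ hne, one_pow, one_mul]
  have hmp : 0 ≤ mpow (fun k => 1 - x k) α := mpow_nonneg (fun k => by linarith [h1 k]) α
  calc mpow (fun k => 1 - x k) α * ∑ β ∈ F, (mchoose (α+β) β : ℝ) * mpow x β
      ≤ mpow (fun k => 1 - x k) α * ∏ k ∈ s, ((1 - x k)⁻¹)^(α k + 1) :=
        mul_le_mul_of_nonneg_left hsum hmp
    _ = ∏ k ∈ s, (1 - x k)⁻¹ := hfac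
    _ ≤ ∏' k, (1 - x k)⁻¹ := by
        refine prod_le_tprod_real (fun k => ?_) hmul s
        have hp : 0 < 1 - x k := by linarith [h1 k]
        have hle : 1 - x k ≤ 1 := by linarith [h0 k]
        exact (one_le_inv₀ hp).2 hle


end AuxLemmas

/-- Theorem 4.3(b): Malliavin derivative bound.
The Hilbert tensor product `X ⊗ U` is modeled by a Hilbert space `W` together with
a bilinear map `t` which is norm-multiplicative on elementary tensors. -/
theorem stmt12 {U X W : Type*}
    [NormedAddCommGroup U] [InnerProductSpace ℝ U]
    [NormedAddCommGroup X] [InnerProductSpace ℝ X]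
    [NormedAddCommGroup W] [InnerProductSpace ℝ W] [CompleteSpace W]
    (t : X →ₗ[ℝ] U →ₗ[ℝ] W) (ht : ∀ (x : X) (y : U), ‖t x y‖ = ‖x‖ * ‖y‖)
    (p q r : ℕ → ℝ) (hp : ∀ k, 0 < p k) (hq : ∀ k, 0 < q k) (hr : ∀ k, 0 < r k)
    (hpqr : ∀ k, 1 / (p k) ^ 2 + 1 / (q k) ^ 2 = 1 / (r k) ^ 2)
    (hrp : Summable fun k => (r k) ^ 2 / (p k) ^ 2)
    (u : MultiIndex → U) (v : MultiIndex → X)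
    (hu : Summable fun α => mpow (fun k => (p k) ^ 2) α * ‖u α‖ ^ 2)
    (hv : Summable fun α => mpow (fun k => ((r k) ^ 2)⁻¹) α * ‖v α‖ ^ 2) :
    (∀ α : MultiIndex, Summable fun β : MultiIndex =>
        ‖Real.sqrt (mchoose (α + β) β) • t (v (α + β)) (u β)‖) ∧
    ∑' α : MultiIndex, mpow (fun k => ((q k) ^ 2)⁻¹) α *
        ‖∑' β : MultiIndex, Real.sqrt (mchoose (α + β) β) • t (v (α + β)) (u β)‖ ^ 2
      ≤ (∏' k, (p k) ^ 2 / ((p k) ^ 2 - (r k) ^ 2)) *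
        ((∑' α : MultiIndex, mpow (fun k => (p k) ^ 2) α * ‖u α‖ ^ 2) *
         (∑' α : MultiIndex, mpow (fun k => ((r k) ^ 2)⁻¹) α * ‖v α‖ ^ 2)) := by
  classical
  have hP : ∀ k, 0 < (p k)^2 := fun k => pow_pos (hp k) 2
  have hQ : ∀ k, 0 < (q k)^2 := fun k => pow_pos (hq k) 2
  have hR : ∀ k, 0 < (r k)^2 := fun k => pow_pos (hr k) 2
  set x : ℕ → ℝ := fun k => (r k)^2 / (p k)^2 with hxdef
  have hx0 : ∀ k, 0 ≤ x k := fun k => le_of_lt (div_pos (hR k) (hP k))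
  have hRP : ∀ k, (r k)^2 < (p k)^2 := by
    intro k
    have h := hpqr k
    have h1 : 1/(p k)^2 < 1/(r k)^2 := by
      have : 0 < 1/(q k)^2 := div_pos one_pos (hQ k)
      linarith
    exact lt_of_one_div_lt_one_div (hP k) h1
  have hx1 : ∀ k, x k < 1 := fun k => (div_lt_one (hP k)).2 (hRP k)
  have h1x : ∀ k, 1 - x k = (r k)^2 / (q k)^2 := by
    intro k
    have h := hpqr k
    rw [hxdef]
    have hp0 := (hP k).ne'
    have hq0 := (hQ k).ne'
    have hr0 := (hR k).ne'
    have hq' : 1/(q k)^2 = 1/(r k)^2 - 1/(p k)^2 := by linarith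
    show 1 - (r k)^2/(p k)^2 = (r k)^2/(q k)^2
    rw [div_eq_mul_one_div ((r k)^2) ((q k)^2), hq', mul_sub, mul_one_div_cancel hr0]
    ring
  have hmul := multipliable_aux hx0 hx1 hrp
  set K := ∏' k, (1 - x k)⁻¹ with hKdef
  have hKtprod : (∏' k, (p k)^2 / ((p k)^2 - (r k)^2)) = K := by
    refine tprod_congr fun k => ?_
    have hxe : 1 - x k = ((p k)^2 - (r k)^2)/(p k)^2 := by
      show 1 - (r k)^2/(p k)^2 = ((p k)^2 - (r k)^2)/(p k)^2
      rw [eq_div_iff (hP k).ne', sub_mul, one_mul, div_mul_cancel₀ _ (hP k).ne']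
    rw [hxe, inv_div]
  have hK1 : (1:ℝ) ≤ K := by
    have h := key_bound hx0 hx1 hmul 0 {0}
    simpa [mpow, mchoose] using h
  have hK0 : (0:ℝ) ≤ K := le_trans zero_le_one hK1
  set f : MultiIndex → ℝ := fun β => mpow (fun k => (p k)^2) β * ‖u β‖^2 with hfdef
  set g : MultiIndex → ℝ := fun γ => mpow (fun k => ((r k)^2)⁻¹) γ * ‖v γ‖^2 with hgdef
  have hf0 : ∀ β, 0 ≤ f β := fun β =>
    mul_nonneg (mpow_nonneg (fun k => le_of_lt (hP k)) β) (sq_nonneg _)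
  have hg0 : ∀ γ, 0 ≤ g γ := fun γ =>
    mul_nonneg (mpow_nonneg (fun k => le_of_lt (inv_pos.2 (hR k))) γ) (sq_nonneg _)
  set Su := ∑' β, f β with hSudef
  set Sv := ∑' γ, g γ with hSvdef
  have hSv0 : 0 ≤ Sv := tsum_nonneg hg0
  have hinj : ∀ α : MultiIndex, Function.Injective (fun β : MultiIndex => α + β) := by
    intro α β β' hbb
    ext k
    have h := DFunLike.congr_fun hbb k
    simp only [Finsupp.add_apply] at h
    omega
  have hinj2 : ∀ β : MultiIndex, Function.Injective (fun α : MultiIndex => α + β) := by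
    intro β α α' hbb
    ext k
    have h := DFunLike.congr_fun hbb k
    simp only [Finsupp.add_apply] at h
    omega
  have hmpos : ∀ α, 0 < mpow (fun k => 1 - x k) α :=
    fun α => mpow_pos (fun k => by linarith [hx1 k]) α
  have hCbnd : ∀ (α : MultiIndex) (F : Finset MultiIndex),
      ∑ β ∈ F, (mchoose (α+β) β : ℝ) * mpow x β ≤ K / mpow (fun k => 1 - x k) α := by
    intro α F
    exact (le_div_iff₀ (hmpos α)).2 (by rw [mul_comm]; exact key_bound hx0 hx1 hmul α F)
  have hCsum : ∀ α, Summable (fun β => (mchoose (α+β) β : ℝ) * mpow x β) := by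
    intro α
    exact summable_of_sum_le
      (fun β => mul_nonneg (Nat.cast_nonneg _) (mpow_nonneg hx0 β)) (hCbnd α)
  have hT : ∀ α, mpow (fun k => 1 - x k) α * ∑' β, (mchoose (α+β) β : ℝ) * mpow x β ≤ K := by
    intro α
    rw [mul_comm, ← le_div_iff₀ (hmpos α)]
    exact Summable.tsum_le_of_sum_le (hCsum α) (hCbnd α)
  -- the two square families
  set A : MultiIndex → MultiIndex → ℝ := fun α β =>
    Real.sqrt ((mchoose (α+β) β : ℝ) * mpow x β * mpow (fun k => (r k)^2) α) with hAdef
  set B : MultiIndex → MultiIndex → ℝ := fun α β => Real.sqrt (f β * g (α+β)) with hBdef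
  have hXnn : ∀ α β, 0 ≤ (mchoose (α+β) β : ℝ) * mpow x β * mpow (fun k => (r k)^2) α :=
    fun α β => mul_nonneg (mul_nonneg (Nat.cast_nonneg _) (mpow_nonneg hx0 β))
      (mpow_nonneg (fun k => le_of_lt (hR k)) α)
  have hYnn : ∀ α β, 0 ≤ f β * g (α+β) := fun α β => mul_nonneg (hf0 β) (hg0 _)
  have e1 : (fun k => x k * (p k)^2) = (fun k => (r k)^2) :=
    funext fun k => div_mul_cancel₀ _ (hP k).ne'
  have e2 : (fun k => (r k)^2 * ((r k)^2)⁻¹) = (fun _ => (1:ℝ)) :=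
    funext fun k => mul_inv_cancel₀ (hR k).ne'
  have hprod : ∀ α β : MultiIndex, mpow x β * (mpow (fun k => (p k)^2) β *
      (mpow (fun k => (r k)^2) α * mpow (fun k => ((r k)^2)⁻¹) (α+β))) = 1 := by
    intro α β
    calc mpow x β * (mpow (fun k => (p k)^2) β *
        (mpow (fun k => (r k)^2) α * mpow (fun k => ((r k)^2)⁻¹) (α+β)))
        = (mpow x β * mpow (fun k => (p k)^2) β) * mpow (fun k => (r k)^2) α
            * mpow (fun k => ((r k)^2)⁻¹) (α+β) := by ring
      _ = mpow (fun k => (r k)^2) β * mpow (fun k => (r k)^2) α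
            * mpow (fun k => ((r k)^2)⁻¹) (α+β) := by rw [← mpow_mul, e1]
      _ = mpow (fun k => (r k)^2) (α+β) * mpow (fun k => ((r k)^2)⁻¹) (α+β) := by
            rw [mul_comm (mpow (fun k => (r k)^2) β) (mpow (fun k => (r k)^2) α), ← mpow_add]
      _ = 1 := by rw [← mpow_mul, e2, mpow_one]
  have hXY : ∀ α β : MultiIndex,
      ((mchoose (α+β) β : ℝ) * mpow x β * mpow (fun k => (r k)^2) α) * (f β * g (α+β))
        = (mchoose (α+β) β : ℝ) * (‖v (α+β)‖ * ‖u β‖)^2 := by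
    intro α β
    rw [hfdef, hgdef]
    have h := hprod α β
    linear_combination ((mchoose (α+β) β : ℝ) * ‖u β‖^2 * ‖v (α+β)‖^2) * h
  have hABeq : ∀ α β : MultiIndex, A α β * B α β
      = Real.sqrt ((mchoose (α+β) β : ℝ)) * (‖v (α+β)‖ * ‖u β‖) := by
    intro α β
    rw [hAdef, hBdef]
    rw [← Real.sqrt_mul (hXnn α β), hXY α β,
      Real.sqrt_mul (Nat.cast_nonneg _), Real.sqrt_sq (mul_nonneg (norm_nonneg _) (norm_nonneg _))]
  have hnorm : ∀ α β : MultiIndex,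
      ‖Real.sqrt (mchoose (α + β) β) • t (v (α + β)) (u β)‖
        = Real.sqrt ((mchoose (α+β) β : ℝ)) * (‖v (α+β)‖ * ‖u β‖) := by
    intro α β
    rw [norm_smul, Real.norm_eq_abs, abs_of_nonneg (Real.sqrt_nonneg _), ht]
  -- summability facts
  have ha2 : ∀ α, Summable (fun β => (mchoose (α+β) β : ℝ) * mpow x β
      * mpow (fun k => (r k)^2) α) := fun α => (hCsum α).mul_right _
  have hgcomp : ∀ α, Summable (fun β => g (α + β)) := fun α => hv.comp_injective (hinj α)
  have hb2 : ∀ α, Summable (fun β => f β * g (α+β)) := by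
    intro α
    refine Summable.of_nonneg_of_le (hYnn α) (fun β => ?_) ((hgcomp α).mul_left Su)
    exact mul_le_mul_of_nonneg_right (Summable.le_tsum hu β (fun β' _ => hf0 β')) (hg0 _)
  have hABsum : ∀ α, Summable (fun β => A α β * B α β) := by
    intro α
    refine Summable.of_nonneg_of_le
      (fun β => mul_nonneg (Real.sqrt_nonneg _) (Real.sqrt_nonneg _)) (fun β => ?_)
      (((ha2 α).add (hb2 α)).div_const 2)
    have h1 := Real.sq_sqrt (hXnn α β)
    have h2 := Real.sq_sqrt (hYnn α β)
    rw [hAdef, hBdef]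
    nlinarith [sq_nonneg (Real.sqrt ((mchoose (α+β) β : ℝ) * mpow x β
        * mpow (fun k => (r k)^2) α) - Real.sqrt (f β * g (α+β)))]
  have part1 : ∀ α : MultiIndex, Summable fun β : MultiIndex =>
      ‖Real.sqrt (mchoose (α + β) β) • t (v (α + β)) (u β)‖ := by
    intro α
    refine (hABsum α).congr (fun β => ?_)
    rw [hABeq α β, ← hnorm α β]
  refine ⟨part1, ?_⟩
  -- Cauchy-Schwarz per α
  have hTa0 : ∀ α, 0 ≤ ∑' β, (mchoose (α+β) β : ℝ) * mpow x β * mpow (fun k => (r k)^2) α :=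
    fun α => tsum_nonneg (hXnn α)
  have hTb0 : ∀ α, 0 ≤ ∑' β, f β * g (α+β) := fun α => tsum_nonneg (hYnn α)
  have hDle : ∀ α : MultiIndex,
      ‖∑' β : MultiIndex, Real.sqrt (mchoose (α + β) β) • t (v (α + β)) (u β)‖^2
        ≤ (∑' β, (mchoose (α+β) β : ℝ) * mpow x β * mpow (fun k => (r k)^2) α)
          * (∑' β, f β * g (α+β)) := by
    intro α
    set Ta := ∑' β, (mchoose (α+β) β : ℝ) * mpow x β * mpow (fun k => (r k)^2) α with hTadef
    set Tb := ∑' β, f β * g (α+β) with hTbdef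
    have h1 : ‖∑' β : MultiIndex, Real.sqrt (mchoose (α + β) β) • t (v (α + β)) (u β)‖
        ≤ ∑' β, A α β * B α β := by
      calc ‖∑' β : MultiIndex, Real.sqrt (mchoose (α + β) β) • t (v (α + β)) (u β)‖
          ≤ ∑' β, ‖Real.sqrt (mchoose (α + β) β) • t (v (α + β)) (u β)‖ :=
            norm_tsum_le_tsum_norm (part1 α)
        _ = ∑' β, A α β * B α β := tsum_congr fun β => by rw [hnorm α β, ← hABeq α β]
    have h2 : ∑' β, A α β * B α β ≤ Real.sqrt Ta * Real.sqrt Tb := by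
      refine Summable.tsum_le_of_sum_le (hABsum α) (fun F => ?_)
      have hcs := Finset.sum_mul_sq_le_sq_mul_sq F (A α) (B α)
      have hA2 : ∑ β ∈ F, (A α β)^2
          = ∑ β ∈ F, ((mchoose (α+β) β : ℝ) * mpow x β * mpow (fun k => (r k)^2) α) :=
        Finset.sum_congr rfl fun β _ => by rw [hAdef]; exact Real.sq_sqrt (hXnn α β)
      have hB2 : ∑ β ∈ F, (B α β)^2 = ∑ β ∈ F, (f β * g (α+β)) :=
        Finset.sum_congr rfl fun β _ => by rw [hBdef]; exact Real.sq_sqrt (hYnn α β)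
      have h3 : ∑ β ∈ F, (A α β)^2 ≤ Ta := by
        rw [hA2]
        exact Summable.sum_le_tsum F (fun β _ => hXnn α β) (ha2 α)
      have h4 : ∑ β ∈ F, (B α β)^2 ≤ Tb := by
        rw [hB2]
        exact Summable.sum_le_tsum F (fun β _ => hYnn α β) (hb2 α)
      have hs0 : 0 ≤ ∑ β ∈ F, A α β * B α β :=
        Finset.sum_nonneg fun β _ => mul_nonneg (Real.sqrt_nonneg _) (Real.sqrt_nonneg _)
      have hsB0 : 0 ≤ ∑ β ∈ F, (B α β)^2 := Finset.sum_nonneg fun β _ => sq_nonneg _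
      have hsA0 : 0 ≤ ∑ β ∈ F, (A α β)^2 := Finset.sum_nonneg fun β _ => sq_nonneg _
      calc ∑ β ∈ F, A α β * B α β = Real.sqrt ((∑ β ∈ F, A α β * B α β)^2) :=
            (Real.sqrt_sq hs0).symm
        _ ≤ Real.sqrt (Ta * Tb) := by
            refine Real.sqrt_le_sqrt ?_
            nlinarith [hcs, h3, h4, hsA0, hsB0, hTa0 α, hTb0 α]
        _ = Real.sqrt Ta * Real.sqrt Tb := Real.sqrt_mul (hTa0 α) _
    have h5 := h1.trans h2
    calc ‖∑' β : MultiIndex, Real.sqrt (mchoose (α + β) β) • t (v (α + β)) (u β)‖^2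
        ≤ (Real.sqrt Ta * Real.sqrt Tb)^2 := by
          exact pow_le_pow_left₀ (norm_nonneg _) h5 2
      _ = Ta * Tb := by
          rw [mul_pow, Real.sq_sqrt (hTa0 α), Real.sq_sqrt (hTb0 α)]
  -- per-α bound for the weighted sum
  have e3 : (fun k => ((q k)^2)⁻¹ * (r k)^2) = fun k => 1 - x k := by
    funext k
    rw [h1x k, div_eq_mul_inv, mul_comm]
  have hQinn : ∀ α, 0 ≤ mpow (fun k => ((q k)^2)⁻¹) α :=
    fun α => mpow_nonneg (fun k => le_of_lt (inv_pos.2 (hQ k))) α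
  have hL : ∀ α : MultiIndex, mpow (fun k => ((q k)^2)⁻¹) α *
      ‖∑' β : MultiIndex, Real.sqrt (mchoose (α + β) β) • t (v (α + β)) (u β)‖^2
        ≤ K * ∑' β, f β * g (α+β) := by
    intro α
    calc mpow (fun k => ((q k)^2)⁻¹) α *
        ‖∑' β : MultiIndex, Real.sqrt (mchoose (α + β) β) • t (v (α + β)) (u β)‖^2
        ≤ mpow (fun k => ((q k)^2)⁻¹) α *
          ((∑' β, (mchoose (α+β) β : ℝ) * mpow x β * mpow (fun k => (r k)^2) α)
            * (∑' β, f β * g (α+β))) := mul_le_mul_of_nonneg_left (hDle α) (hQinn α)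
      _ = (mpow (fun k => ((q k)^2)⁻¹) α * mpow (fun k => (r k)^2) α
            * (∑' β, (mchoose (α+β) β : ℝ) * mpow x β)) * (∑' β, f β * g (α+β)) := by
          rw [tsum_mul_right]
          ring
      _ = (mpow (fun k => 1 - x k) α * (∑' β, (mchoose (α+β) β : ℝ) * mpow x β))
            * (∑' β, f β * g (α+β)) := by rw [← mpow_mul, e3]
      _ ≤ K * ∑' β, f β * g (α+β) := mul_le_mul_of_nonneg_right (hT α) (hTb0 α)
  -- final summation
  have hL0 : ∀ α : MultiIndex, 0 ≤ mpow (fun k => ((q k)^2)⁻¹) α *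
      ‖∑' β : MultiIndex, Real.sqrt (mchoose (α + β) β) • t (v (α + β)) (u β)‖^2 :=
    fun α => mul_nonneg (hQinn α) (sq_nonneg _)
  have hbound : ∀ F : Finset MultiIndex,
      ∑ α ∈ F, (mpow (fun k => ((q k)^2)⁻¹) α *
        ‖∑' β : MultiIndex, Real.sqrt (mchoose (α + β) β) • t (v (α + β)) (u β)‖^2)
      ≤ K * (Su * Sv) := by
    intro F
    have hTbF : ∑ α ∈ F, ∑' β, f β * g (α+β) ≤ Su * Sv := by
      have hswap : ∑ α ∈ F, ∑' β, f β * g (α+β) = ∑' β, ∑ α ∈ F, f β * g (α+β) :=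
        (Summable.tsum_finsetSum (fun α _ => hb2 α)).symm
      rw [hswap]
      have hpt : ∀ β, ∑ α ∈ F, f β * g (α+β) ≤ f β * Sv := by
        intro β
        rw [← Finset.mul_sum]
        refine mul_le_mul_of_nonneg_left ?_ (hf0 β)
        have himg : ∑ α ∈ F, g (α + β) = ∑ γ ∈ F.image (fun α => α + β), g γ := by
          rw [Finset.sum_image (fun a _ a' _ h => hinj2 β h)]
        rw [himg]
        exact Summable.sum_le_tsum _ (fun γ _ => hg0 γ) hv
      calc ∑' β, ∑ α ∈ F, f β * g (α+β) ≤ ∑' β, f β * Sv :=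
            Summable.tsum_le_tsum hpt (summable_sum (fun α _ => hb2 α)) (hu.mul_right Sv)
        _ = Su * Sv := tsum_mul_right
    calc ∑ α ∈ F, (mpow (fun k => ((q k)^2)⁻¹) α *
          ‖∑' β : MultiIndex, Real.sqrt (mchoose (α + β) β) • t (v (α + β)) (u β)‖^2)
        ≤ ∑ α ∈ F, K * ∑' β, f β * g (α+β) := Finset.sum_le_sum fun α _ => hL α
      _ = K * ∑ α ∈ F, ∑' β, f β * g (α+β) := by rw [← Finset.mul_sum]
      _ ≤ K * (Su * Sv) := mul_le_mul_of_nonneg_left hTbF hK0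
  rw [hKtprod]
  exact Summable.tsum_le_of_sum_le (summable_of_sum_le hL0 hbound) hbound

end
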